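/- Let $k$ be an algebraically closed field of characteristic $p>0$, $A$ a complete discrete valuation ring over $k$ with residue field $k$, and let $B/A$, $B'/A$ be two restrained Galois extensions of type $(n,d)$ in canonical form: $B = k[[x]]$, $B' = k[[x']]$ with $G = G_{n,d}$ acting by $\gamma(x) = \zeta x$, $\sigma(x) = x/(1 - \theta(\sigma)x)$ and $\gamma'(x') = \zeta x'$, $\sigma'(x') = x'/(1-\theta'(\sigma)x')$, where $\theta, \theta' : H \hookrightarrow k$ are $\mathbf{F}_q$-linear embeddings of the $p$-Sylow subgroup $H$. If $\theta(H) = c\,\theta'(H)$ for some $c \in k^\times$, then the two $G$-extensions are isomorphic: there exist a $k$-algebra isomorphism $\phi : B \to B'$ over $A$ and a group automorphism $h$ of $G$ with $\sigma' = \phi \circ h(\sigma) \circ \phi^{-1}$ for all $\sigma \in G$. -/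

import Mathlib

open PowerSeries Pointwise

/-- The Möbius substitution `F(x) ↦ F(x/(1-ux))` on `k[[x]]`, coefficientwise
`coeff m = ∑_{j ≤ m} (coeff j F)·C(m-1, m-j)·u^{m-j}`. -/
noncomputable def mob {k : Type*} [Field k] (u : k) (F : PowerSeries k) : PowerSeries k :=
  PowerSeries.mk fun m =>
    ∑ j ∈ Finset.range (m + 1),
      (PowerSeries.coeff j F) * ((m - 1).choose (m - j) : k) * u ^ (m - j)

/-- rescale as an algebra equivalence. -/
noncomputable def rescaleAE {k : Type*} [Field k] (a : kˣ) :
    PowerSeries k ≃ₐ[k] PowerSeries k :=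
  { toFun := PowerSeries.rescale (a : k)
    invFun := PowerSeries.rescale ((a⁻¹ : kˣ) : k)
    left_inv := fun f => by
      show PowerSeries.rescale _ (PowerSeries.rescale _ f) = f
      rw [PowerSeries.rescale_rescale]
      simp
    right_inv := fun f => by
      show PowerSeries.rescale _ (PowerSeries.rescale _ f) = f
      rw [PowerSeries.rescale_rescale]
      simp
    map_mul' := map_mul _
    map_add' := map_add _
    commutes' := fun r => by
      show PowerSeries.rescale _ _ = _
      rw [← PowerSeries.C_eq_algebraMap]
      ext m
      simp only [PowerSeries.coeff_rescale, PowerSeries.coeff_C]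
      split
      · next h => simp [h]
      · simp }

lemma rescaleAE_apply {k : Type*} [Field k] (a : kˣ) (f : PowerSeries k) :
    rescaleAE a f = PowerSeries.rescale (a : k) f := rfl

lemma rescale_mob {k : Type*} [Field k] (a u : k) (G : PowerSeries k) :
    PowerSeries.rescale a (mob u G) = mob (u * a) (PowerSeries.rescale a G) := by
  ext m
  simp only [mob, PowerSeries.coeff_rescale, PowerSeries.coeff_mk, Finset.mul_sum]
  refine Finset.sum_congr rfl fun j hj => ?_
  have hjm : j ≤ m := Nat.lt_succ_iff.mp (Finset.mem_range.mp hj)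
  have : a ^ m = a ^ j * a ^ (m - j) := by
    rw [← pow_add, Nat.add_sub_cancel' hjm]
  rw [this, mul_pow]
  ring

theorem stmt14 {p s q n d : ℕ} (hp : p.Prime) (hs : s ≠ 0) (hq : q = p ^ s)
    (hn : 1 ≤ n) (hnq : n ∣ q - 1) (hnp : Nat.Coprime n p) (hd : 1 ≤ d)
    {F : Type*} [Field F] [Fintype F] (hF : Fintype.card F = q)
    {k : Type*} [Field k] [IsAlgClosed k] [CharP k p] [Algebra F k]
    (ζ : k) (hζ : IsPrimitiveRoot ζ n)
    (θ θ' : (Fin d → F) →ₗ[F] k)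
    (hθ : Function.Injective θ) (hθ' : Function.Injective θ')
    (c : kˣ) (hc : Set.range ⇑θ = (c : k) • Set.range ⇑θ') :
    ∃ φ : PowerSeries k ≃ₐ[k] PowerSeries k,
      ∃ h : (Fin d → F) ≃ₗ[F] (Fin d → F),
        (∀ σ : Fin d → F, ∀ G : PowerSeries k,
          φ (mob (θ (h σ)) G) = mob (θ' σ) (φ G)) ∧
        (∀ G : PowerSeries k,
          φ (PowerSeries.rescale ζ G) = PowerSeries.rescale ζ (φ G)) := by
  -- the linear map σ ↦ c • θ' σ
  let g : (Fin d → F) →ₗ[F] k := (c : k) • θ'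
  have hg : Function.Injective g := by
    intro x y hxy
    apply hθ'
    have : (c : k) * θ' x = (c : k) * θ' y := hxy
    exact mul_left_cancel₀ c.ne_zero this
  have hrange : LinearMap.range g = LinearMap.range θ := by
    apply le_antisymm
    · rintro _ ⟨x, rfl⟩
      have : (c : k) * θ' x ∈ Set.range ⇑θ := by
        rw [hc]
        exact ⟨θ' x, ⟨x, rfl⟩, rfl⟩
      obtain ⟨y, hy⟩ := this
      exact ⟨y, hy⟩
    · rintro _ ⟨x, rfl⟩
      have : θ x ∈ (c : k) • Set.range ⇑θ' := hc ▸ ⟨x, rfl⟩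
      obtain ⟨_, ⟨y, rfl⟩, hy⟩ := this
      exact ⟨y, hy⟩
  let e1 := LinearEquiv.ofInjective g hg
  let e2 := LinearEquiv.ofEq _ _ hrange
  let e3 := (LinearEquiv.ofInjective θ hθ).symm
  refine ⟨rescaleAE c⁻¹, e1 ≪≫ₗ e2 ≪≫ₗ e3, ?_, ?_⟩
  · intro σ G
    have hθh : θ ((e1 ≪≫ₗ e2 ≪≫ₗ e3) σ) = (c : k) * θ' σ := by
      have h1 : ∀ z : LinearMap.range θ, θ (e3 z) = (z : k) := by
        intro z
        have := (LinearEquiv.ofInjective θ hθ).apply_symm_apply z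
        exact congrArg Subtype.val this
      simp only [LinearEquiv.trans_apply]
      rw [h1]
      rfl
    simp only [rescaleAE_apply, hθh, rescale_mob]
    congr 1
    rw [mul_assoc, mul_comm (θ' σ), ← mul_assoc, Units.mul_inv, one_mul]
  · intro G
    simp only [rescaleAE_apply, PowerSeries.rescale_rescale, mul_comm]
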